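/- For every fixed δ ∈ ℝ, limsup_{N → ∞} of g(N) := (πN)^{-1/2} ∫_{0}^{π/2} exp(-(log(cos x) + N + δ)²/(4N)) · (1/cos x) dx is at most 2. -/
import Mathlib
set_option maxHeartbeats 1000000

open Real Filter MeasureTheory Set

section Aux

variable {N δ : ℝ}

-- pointwise bound on the whole interval
lemma gr_ptwise_bound (hN : 0 < N) {x : ℝ} (hx0 : 0 ≤ Real.cos x) :
    Real.exp (-((Real.log (Real.cos x) + N + δ) ^ 2 / (4 * N))) * (1 / Real.cos x)
      ≤ Real.exp (2 * N + δ) := by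
  rcases eq_or_lt_of_le hx0 with h | h
  · rw [← h]
    simp [Real.exp_pos]
    positivity
  · set t := Real.log (Real.cos x) with ht
    have hc : (1 : ℝ) / Real.cos x = Real.exp (-t) := by
      rw [one_div, Real.exp_neg, Real.exp_log h]
    rw [hc, ← Real.exp_add]
    apply Real.exp_le_exp.2
    have h4 : (0:ℝ) < 4 * N := by linarith
    have key : -t - (2*N + δ) ≤ (t + N + δ)^2 / (4*N) := by
      rw [le_div_iff₀ h4]
      nlinarith [sq_nonneg (t + 3*N + δ)]
    linarith

lemma gr_measurable (N δ : ℝ) :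
    Measurable (fun x => Real.exp (-((Real.log (Real.cos x) + N + δ) ^ 2 / (4 * N))) *
      (1 / Real.cos x)) := by
  measurability

lemma gr_integrableOn (hN : 0 < N) :
    IntegrableOn (fun x => Real.exp (-((Real.log (Real.cos x) + N + δ) ^ 2 / (4 * N))) *
      (1 / Real.cos x)) (Set.Icc 0 (π/2)) := by
  apply Measure.integrableOn_of_bounded (M := Real.exp (2 * N + δ))
  · exact (measure_Icc_lt_top).ne
  · exact (gr_measurable N δ).aestronglyMeasurable
  · filter_upwards [ae_restrict_mem measurableSet_Icc] with x hx
    have hcos : 0 ≤ Real.cos x :=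
      Real.cos_nonneg_of_mem_Icc ⟨by linarith [hx.1, Real.pi_pos], hx.2⟩
    have h0 : 0 ≤ Real.exp (-((Real.log (Real.cos x) + N + δ) ^ 2 / (4 * N))) *
        (1 / Real.cos x) := by positivity
    rw [Real.norm_of_nonneg h0]
    exact gr_ptwise_bound hN hcos

lemma gr_gauss_integrable (hN : 0 < N) (c : ℝ) :
    Integrable (fun t : ℝ => Real.exp (-((t + c) ^ 2 / (4 * N)))) := by
  have h : (fun t : ℝ => Real.exp (-((t + c) ^ 2 / (4 * N))))
      = fun t : ℝ => Real.exp (-(1/(4*N)) * (t + c)^2) := by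
    funext t; congr 1; field_simp
  rw [h]
  exact (integrable_exp_neg_mul_sq (by positivity)).comp_add_right c

lemma gr_gauss_integral (hN : 0 < N) (c : ℝ) :
    ∫ t : ℝ, Real.exp (-((t + c) ^ 2 / (4 * N))) = 2 * Real.sqrt (π * N) := by
  have h : (fun t : ℝ => Real.exp (-((t + c) ^ 2 / (4 * N))))
      = fun t : ℝ => Real.exp (-(1/(4*N)) * (t + c)^2) := by
    funext t; congr 1; field_simp
  rw [h]
  rw [MeasureTheory.integral_add_right_eq_self (fun t => Real.exp (-(1/(4*N)) * t^2)) c]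
  rw [integral_gaussian]
  rw [show π / (1/(4*N)) = (2:ℝ)^2 * (π * N) by field_simp; ring]
  rw [Real.sqrt_mul (by positivity), Real.sqrt_sq (by norm_num)]

lemma gr_key_subst (hN : 0 < N) {ε : ℝ} (hε0 : 0 < ε) (hεπ : ε < π/2) :
    ∫ x in Set.Ioo ε (π/2),
        Real.tan x * Real.exp (-((Real.log (Real.cos x) + N + δ) ^ 2 / (4 * N)))
      ≤ 2 * Real.sqrt (π * N) := by
  set G : ℝ → ℝ := fun t => Real.exp (-((t + N + δ) ^ 2 / (4 * N))) with hG
  have hG' : G = fun t => Real.exp (-((t + (N + δ)) ^ 2 / (4 * N))) := by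
    funext t; simp [hG, add_assoc]
  have hs : MeasurableSet (Set.Ioo ε (π/2)) := measurableSet_Ioo
  have hcos : ∀ x ∈ Set.Ioo ε (π/2), 0 < Real.cos x := by
    intro x hx
    exact Real.cos_pos_of_mem_Ioo ⟨by linarith [hx.1, Real.pi_pos], hx.2⟩
  have hderiv : ∀ x ∈ Set.Ioo ε (π/2),
      HasDerivWithinAt (fun y => Real.log (Real.cos y)) (-Real.tan x) (Set.Ioo ε (π/2)) x := by
    intro x hx
    have h1 : HasDerivAt (fun y => Real.log (Real.cos y)) ((Real.cos x)⁻¹ * (-Real.sin x)) x :=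
      (Real.hasDerivAt_log (hcos x hx).ne').comp x (Real.hasDerivAt_cos x)
    have h2 : (Real.cos x)⁻¹ * (-Real.sin x) = -Real.tan x := by
      rw [Real.tan_eq_sin_div_cos]; field_simp
    rw [h2] at h1
    exact h1.hasDerivWithinAt
  have hinj : Set.InjOn (fun y => Real.log (Real.cos y)) (Set.Ioo ε (π/2)) := by
    have : StrictAntiOn (fun y => Real.log (Real.cos y)) (Set.Ioo ε (π/2)) := by
      intro x hx y hy hxy
      exact Real.log_lt_log (hcos y hy)
        (Real.strictAntiOn_cos ⟨by linarith [hx.1], by linarith [hx.2, Real.pi_pos]⟩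
          ⟨by linarith [hy.1], by linarith [hy.2, Real.pi_pos]⟩ hxy)
    exact this.injOn
  have hchg := MeasureTheory.integral_image_eq_integral_abs_deriv_smul hs hderiv hinj G
  have heq : ∫ x in Set.Ioo ε (π/2), |(-Real.tan x)| • G (Real.log (Real.cos x))
      = ∫ x in Set.Ioo ε (π/2),
          Real.tan x * Real.exp (-((Real.log (Real.cos x) + N + δ) ^ 2 / (4 * N))) := by
    apply MeasureTheory.setIntegral_congr_fun hs
    intro x hx
    have htan : 0 ≤ Real.tan x := by
      rw [Real.tan_eq_sin_div_cos]
      have hsin : 0 ≤ Real.sin x :=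
        Real.sin_nonneg_of_nonneg_of_le_pi (by linarith [hx.1]) (by linarith [hx.2, Real.pi_pos])
      exact div_nonneg hsin (hcos x hx).le
    simp only [abs_neg, abs_of_nonneg htan, smul_eq_mul, hG]
  calc ∫ x in Set.Ioo ε (π/2),
          Real.tan x * Real.exp (-((Real.log (Real.cos x) + N + δ) ^ 2 / (4 * N)))
      = ∫ t in (fun y => Real.log (Real.cos y)) '' (Set.Ioo ε (π/2)), G t := by
        rw [hchg, heq]
    _ ≤ ∫ t : ℝ, G t := by
        apply MeasureTheory.setIntegral_le_integral
        · rw [hG']; exact gr_gauss_integrable hN (N + δ)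
        · filter_upwards with t
          exact (Real.exp_pos _).le
    _ = 2 * Real.sqrt (π * N) := by rw [hG']; exact gr_gauss_integral hN (N + δ)

end Aux

/-- The key upper bound in the entropy computation for the grim reaper: for every fixed
`δ ∈ ℝ`, the limsup as `N → ∞` of
`g(N) = (πN)^{-1/2} ∫₀^{π/2} exp(-(log cos x + N + δ)²/(4N)) (1/cos x) dx` is at most `2`. -/
theorem grim_reaper_g_limsup_le_two (δ : ℝ) :
    Filter.limsup (fun N : ℝ =>
        (π * N) ^ (-(1 : ℝ) / 2) *
          ∫ x in (0 : ℝ)..(π / 2),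
            Real.exp (-((Real.log (Real.cos x) + N + δ) ^ 2 / (4 * N))) *
              (1 / Real.cos x))
      Filter.atTop ≤ 2 := by
  have hπ := Real.pi_pos
  refine le_of_forall_gt_imp_ge_of_dense fun b hb => ?_
  have hb0 : (0:ℝ) < b := by linarith
  have h2b1 : 2/b < 1 := (div_lt_one hb0).2 hb
  have h2b0 : (0:ℝ) < 2/b := by positivity
  set t : ℝ := (2/b + 1)/2 with hts
  have ht0 : 0 < t := by rw [hts]; linarith
  have ht1 : t < 1 := by rw [hts]; linarith
  set ε : ℝ := Real.arcsin t with hεs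
  have hε0 : 0 < ε := Real.arcsin_pos.2 ht0
  have hεπ : ε < π/2 := Real.arcsin_lt_pi_div_two.2 ht1
  have hsinε : Real.sin ε = t := Real.sin_arcsin (by linarith) ht1.le
  have hsin2b : 2/b < Real.sin ε := by rw [hsinε, hts]; linarith
  have hs0 : 0 < Real.sin ε := lt_trans h2b0 hsin2b
  have hcosε : 0 < Real.cos ε := Real.cos_pos_of_mem_Ioo ⟨by linarith, hεπ⟩
  set η : ℝ := b - 2 / Real.sin ε with hη
  have hηpos : 0 < η := by
    have h2s : 2 / Real.sin ε < b := by
      rw [div_lt_iff₀ hs0]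
      have := (div_lt_iff₀ hb0).1 hsin2b
      nlinarith
    rw [hη]; linarith
  have hev3 : ∀ᶠ N : ℝ in atTop, (ε / Real.cos ε) * Real.exp (-(N/16)) < η := by
    have h1 : Tendsto (fun N : ℝ => -(N/16)) atTop atBot :=
      tendsto_neg_atTop_atBot.comp (tendsto_id.atTop_div_const (by norm_num))
    have h2 : Tendsto (fun N : ℝ => (ε / Real.cos ε) * Real.exp (-(N/16))) atTop (nhds 0) := by
      have := (Real.tendsto_exp_atBot.comp h1).const_mul (ε / Real.cos ε)
      simpa using this
    exact h2.eventually_lt_const hηpos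
  have hle : ∀ᶠ N : ℝ in atTop,
      (π * N) ^ (-(1 : ℝ) / 2) *
          (∫ x in (0 : ℝ)..(π / 2),
            Real.exp (-((Real.log (Real.cos x) + N + δ) ^ 2 / (4 * N))) *
              (1 / Real.cos x)) ≤ b := by
    filter_upwards [eventually_ge_atTop (1:ℝ),
      eventually_ge_atTop (2*(|Real.log (Real.cos ε)| + |δ|)), hev3] with N hN1 hN2 hN3
    have hN : (0:ℝ) < N := by linarith
    set L := Real.log (Real.cos ε) with hL
    have hLN : N/2 ≤ L + N + δ := by
      have h1 : -|L| ≤ L := neg_abs_le L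
      have h2 : -|δ| ≤ δ := neg_abs_le δ
      linarith
    set f : ℝ → ℝ := fun x =>
      Real.exp (-((Real.log (Real.cos x) + N + δ) ^ 2 / (4 * N))) * (1 / Real.cos x) with hf
    have hInt : IntegrableOn f (Set.Icc 0 (π/2)) := gr_integrableOn hN
    have hII1 : IntervalIntegrable f volume 0 ε := by
      apply (hInt.mono_set ?_).intervalIntegrable
      rw [Set.uIcc_of_le hε0.le]
      exact Set.Icc_subset_Icc le_rfl hεπ.le
    have hII2 : IntervalIntegrable f volume ε (π/2) := by
      apply (hInt.mono_set ?_).intervalIntegrable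
      rw [Set.uIcc_of_le hεπ.le]
      exact Set.Icc_subset_Icc hε0.le le_rfl
    -- Part A : integral over [0, ε]
    have hA : ∫ x in (0:ℝ)..ε, f x ≤ ε * f ε := by
      have hmono : ∀ x ∈ Set.Icc (0:ℝ) ε, f x ≤ f ε := by
        intro x hx
        have hcosx : Real.cos ε ≤ Real.cos x :=
          Real.cos_le_cos_of_nonneg_of_le_pi hx.1 (by linarith) hx.2
        have hcosx0 : 0 < Real.cos x := lt_of_lt_of_le hcosε hcosx
        have hlog : L ≤ Real.log (Real.cos x) := by
          rw [hL]; exact Real.log_le_log hcosε hcosx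
        have hsq : (L + N + δ)^2 ≤ (Real.log (Real.cos x) + N + δ)^2 := by nlinarith
        have he : Real.exp (-((Real.log (Real.cos x) + N + δ)^2/(4*N)))
            ≤ Real.exp (-((L+N+δ)^2/(4*N))) := by
          apply Real.exp_le_exp.2
          apply neg_le_neg
          gcongr
        have hinv : 1/Real.cos x ≤ 1/Real.cos ε := one_div_le_one_div_of_le hcosε hcosx
        calc f x = Real.exp (-((Real.log (Real.cos x) + N + δ)^2/(4*N))) * (1/Real.cos x) := rfl
          _ ≤ Real.exp (-((L+N+δ)^2/(4*N))) * (1/Real.cos ε) :=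
              mul_le_mul he hinv (by positivity) (Real.exp_pos _).le
          _ = f ε := by rw [hf, hL]
      calc ∫ x in (0:ℝ)..ε, f x ≤ ∫ _x in (0:ℝ)..ε, f ε :=
            intervalIntegral.integral_mono_on hε0.le hII1 intervalIntegrable_const hmono
        _ = ε * f ε := by rw [intervalIntegral.integral_const, smul_eq_mul, sub_zero]
    -- Part B : integral over [ε, π/2]
    have hB : ∫ x in ε..(π/2), f x ≤ (1/Real.sin ε) * (2 * Real.sqrt (π*N)) := by
      rw [intervalIntegral.integral_of_le hεπ.le, MeasureTheory.integral_Ioc_eq_integral_Ioo]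
      have hIntf : IntegrableOn f (Set.Ioo ε (π/2)) :=
        hInt.mono_set (fun x hx => ⟨hε0.le.trans hx.1.le, hx.2.le⟩)
      have hIntTan : IntegrableOn (fun x => Real.tan x *
          Real.exp (-((Real.log (Real.cos x) + N + δ)^2/(4*N)))) (Set.Ioo ε (π/2)) := by
        apply Measure.integrableOn_of_bounded (M := Real.exp (2*N+δ))
        · exact (measure_Ioo_lt_top).ne
        · apply Measurable.aestronglyMeasurable
          have h1 : Measurable fun x : ℝ =>
              Real.exp (-((Real.log (Real.cos x) + N + δ)^2/(4*N))) := by measurability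
          simp only [Real.tan_eq_sin_div_cos]
          exact (Real.measurable_sin.div Real.measurable_cos).mul h1
        · filter_upwards [ae_restrict_mem measurableSet_Ioo] with x hx
          have hcx : 0 < Real.cos x := Real.cos_pos_of_mem_Ioo ⟨by linarith [hx.1], hx.2⟩
          have hsx0 : 0 ≤ Real.sin x :=
            Real.sin_nonneg_of_nonneg_of_le_pi (by linarith [hx.1]) (by linarith [hx.2])
          have htan0 : 0 ≤ Real.tan x := by
            rw [Real.tan_eq_sin_div_cos]; exact div_nonneg hsx0 hcx.le
          rw [Real.norm_of_nonneg (by positivity)]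
          have htf : Real.tan x * Real.exp (-((Real.log (Real.cos x) + N + δ)^2/(4*N)))
              = Real.sin x * f x := by
            simp only [hf, Real.tan_eq_sin_div_cos]
            field_simp
          rw [htf]
          have hfx : f x ≤ Real.exp (2*N+δ) := gr_ptwise_bound hN hcx.le
          have hf0 : 0 ≤ f x := by
            simp only [hf]; positivity
          nlinarith [Real.sin_le_one x]
      have hmono : ∀ x ∈ Set.Ioo ε (π/2), f x ≤ (1/Real.sin ε) * (Real.tan x *
          Real.exp (-((Real.log (Real.cos x) + N + δ)^2/(4*N)))) := by
        intro x hx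
        have hcx : 0 < Real.cos x := Real.cos_pos_of_mem_Ioo ⟨by linarith [hx.1], hx.2⟩
        have hsinx : Real.sin ε ≤ Real.sin x := by
          apply Real.strictMonoOn_sin.monotoneOn ⟨by linarith, hεπ.le⟩
            ⟨by linarith [hx.1], hx.2.le⟩ hx.1.le
        have hsx0 : 0 < Real.sin x := lt_of_lt_of_le hs0 hsinx
        have htan0 : 0 ≤ Real.tan x := by
          rw [Real.tan_eq_sin_div_cos]; exact div_nonneg hsx0.le hcx.le
        have h1 : (1:ℝ)/Real.cos x = Real.tan x / Real.sin x := by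
          rw [Real.tan_eq_sin_div_cos]
          field_simp
        have h2 : Real.tan x / Real.sin x ≤ Real.tan x / Real.sin ε :=
          div_le_div_of_nonneg_left htan0 hs0 hsinx
        calc f x = Real.exp (-((Real.log (Real.cos x) + N + δ)^2/(4*N)))
              * (Real.tan x / Real.sin x) := by simp only [hf, h1]
          _ ≤ Real.exp (-((Real.log (Real.cos x) + N + δ)^2/(4*N)))
              * (Real.tan x / Real.sin ε) := by
              exact mul_le_mul_of_nonneg_left h2 (Real.exp_pos _).le
          _ = (1/Real.sin ε) * (Real.tan x *
              Real.exp (-((Real.log (Real.cos x) + N + δ)^2/(4*N)))) := by ring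
      calc ∫ x in Set.Ioo ε (π/2), f x
          ≤ ∫ x in Set.Ioo ε (π/2), (1/Real.sin ε) * (Real.tan x *
              Real.exp (-((Real.log (Real.cos x) + N + δ)^2/(4*N)))) :=
            MeasureTheory.setIntegral_mono_on hIntf (hIntTan.const_mul _) measurableSet_Ioo hmono
        _ = (1/Real.sin ε) * ∫ x in Set.Ioo ε (π/2), Real.tan x *
              Real.exp (-((Real.log (Real.cos x) + N + δ)^2/(4*N))) :=
            MeasureTheory.integral_const_mul _ _
        _ ≤ (1/Real.sin ε) * (2 * Real.sqrt (π*N)) :=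
            mul_le_mul_of_nonneg_left (gr_key_subst hN hε0 hεπ) (by positivity)
    -- r bookkeeping
    have hsplit : (∫ x in (0:ℝ)..(π/2), f x)
        = (∫ x in (0:ℝ)..ε, f x) + ∫ x in ε..(π/2), f x :=
      (intervalIntegral.integral_add_adjacent_intervals hII1 hII2).symm
    set r : ℝ := (π*N)^(-(1:ℝ)/2) with hr
    have hr0 : 0 ≤ r := Real.rpow_nonneg (by positivity) _
    have hr1 : r ≤ 1 :=
      Real.rpow_le_one_of_one_le_of_nonpos (by nlinarith [Real.pi_gt_three]) (by norm_num)
    have hrs : r * (2 * Real.sqrt (π*N)) = 2 := by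
      have h1 : r = (Real.sqrt (π*N))⁻¹ := by
        rw [hr, show (-(1:ℝ)/2) = -(1/2) by norm_num, Real.rpow_neg (by positivity),
          ← Real.sqrt_eq_rpow]
      have h2 : 0 < Real.sqrt (π*N) := Real.sqrt_pos.2 (by positivity)
      rw [h1]; field_simp
    have hεK : ε * f ε ≤ (ε/Real.cos ε) * Real.exp (-(N/16)) := by
      have hE : Real.exp (-((L+N+δ)^2/(4*N))) ≤ Real.exp (-(N/16)) := by
        apply Real.exp_le_exp.2
        have hsq : (N/2)^2 ≤ (L+N+δ)^2 := by nlinarith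
        have h16 : N/16 ≤ (L+N+δ)^2/(4*N) := by
          rw [le_div_iff₀ (by positivity)]; nlinarith
        linarith
      calc ε * f ε = (ε/Real.cos ε) * Real.exp (-((L+N+δ)^2/(4*N))) := by
            simp only [hf, ← hL]; field_simp
        _ ≤ (ε/Real.cos ε) * Real.exp (-(N/16)) :=
            mul_le_mul_of_nonneg_left hE (by positivity)
    have hfε0 : 0 ≤ ε * f ε := by
      simp only [hf]
      positivity
    calc (π * N) ^ (-(1 : ℝ) / 2) *
          (∫ x in (0 : ℝ)..(π / 2),
            Real.exp (-((Real.log (Real.cos x) + N + δ) ^ 2 / (4 * N))) *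
              (1 / Real.cos x))
        = r * ((∫ x in (0:ℝ)..ε, f x) + ∫ x in ε..(π/2), f x) := by rw [← hsplit, hf, hr]
      _ ≤ r * (ε * f ε + (1/Real.sin ε) * (2 * Real.sqrt (π*N))) :=
          mul_le_mul_of_nonneg_left (add_le_add hA hB) hr0
      _ = r * (ε * f ε) + (1/Real.sin ε) * (r * (2 * Real.sqrt (π*N))) := by ring
      _ ≤ 1 * ((ε/Real.cos ε) * Real.exp (-(N/16))) + (1/Real.sin ε) * 2 := by
          refine add_le_add (mul_le_mul hr1 hεK hfε0 zero_le_one) ?_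
          rw [hrs]
      _ ≤ η + 2 / Real.sin ε := by
          rw [one_mul]
          refine add_le_add hN3.le (le_of_eq (by ring))
      _ = b := by rw [hη]; ring
  have hnn : ∀ᶠ N : ℝ in atTop, (0:ℝ) ≤
      (π * N) ^ (-(1 : ℝ) / 2) *
          ∫ x in (0 : ℝ)..(π / 2),
            Real.exp (-((Real.log (Real.cos x) + N + δ) ^ 2 / (4 * N))) *
              (1 / Real.cos x) := by
    filter_upwards [eventually_ge_atTop (0:ℝ)] with N hN0
    have h1 : 0 ≤ (π * N) ^ (-(1:ℝ)/2) := Real.rpow_nonneg (by positivity) _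
    have h2 : 0 ≤ ∫ x in (0:ℝ)..(π/2),
        Real.exp (-((Real.log (Real.cos x) + N + δ) ^ 2 / (4 * N))) * (1 / Real.cos x) := by
      apply intervalIntegral.integral_nonneg (by positivity)
      intro x hx
      have hc : 0 ≤ Real.cos x :=
        Real.cos_nonneg_of_mem_Icc ⟨by linarith [hx.1, hπ], hx.2⟩
      positivity
    exact mul_nonneg h1 h2
  exact Filter.limsup_le_of_le (isCoboundedUnder_le_of_eventually_le atTop hnn) hle
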